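/- Let X = [0,1]^ω and let ≾ be a total SWR on X satisfying anonymity and strong Pareto. Then at least one of the sets E = {(x,y) : x ≻ y}, D = {(x,y) : y ≻ x} fails to have the Baire property in X × X. -/

import Mathlib

open Set

/-- A set has the Baire property iff it differs from an open set by a meager set. -/
def HasBaireProperty {α : Type*} [TopologicalSpace α] (s : Set α) : Prop :=
  ∃ u : Set α, IsOpen u ∧ IsMeagre (symmDiff s u)

/-- Anonymity: swapping two coordinates yields an equivalent stream. -/
def Anonymity {Y : Type*} (r : (ℕ → Y) → (ℕ → Y) → Prop) : Prop :=
  ∀ x y : ℕ → Y,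
    (∃ i j : ℕ, y i = x j ∧ y j = x i ∧ ∀ k, k ≠ i → k ≠ j → y k = x k) →
    (r x y ∧ r y x)

/-- Strong Pareto. -/
def StrongPareto {Y : Type*} [Preorder Y] (r : (ℕ → Y) → (ℕ → Y) → Prop) : Prop :=
  ∀ x y : ℕ → Y, (∀ n, x n ≤ y n) → (∃ i, x i < y i) → (r x y ∧ ¬ r y x)

def blk (N k m : ℕ) : ℕ → ℕ := fun i =>
  if i < m then i + k*N else if k*N ≤ i ∧ i < k*N + m then i - k*N else i

lemma blk_blk {N k m : ℕ} (hk : 1 ≤ k) (hm : m ≤ N) (i : ℕ) :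
    blk N k m (blk N k m i) = i := by
  have hNk : N ≤ k * N := Nat.le_mul_of_pos_left N hk
  unfold blk; split_ifs <;> omega

lemma blk_zero (N k : ℕ) (i : ℕ) : blk N k 0 i = i := by
  unfold blk; simp

lemma blk_succ {N k m : ℕ} (hk : 1 ≤ k) (hm : m < N) (i : ℕ) :
    blk N k (m+1) i = blk N k m (Equiv.swap m (m + k*N) i) := by
  have hNk : N ≤ k * N := Nat.le_mul_of_pos_left N hk
  rw [Equiv.swap_apply_def]
  unfold blk; split_ifs <;> omega

lemma blk_lt {N k m i : ℕ} (hk : 1 ≤ k) (hi : i < m) : blk N k m i = i + k * N := by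
  unfold blk; rw [if_pos hi]

/-- equivalence under block swaps, from anonymity. -/
lemma equiv_blk {Y : Type*} {r : (ℕ → Y) → (ℕ → Y) → Prop}
    (hrefl : Reflexive r) (htrans : Transitive r) (hA : Anonymity r)
    {N k : ℕ} (hk : 1 ≤ k) :
    ∀ m, m ≤ N → ∀ x : ℕ → Y, r x (x ∘ blk N k m) ∧ r (x ∘ blk N k m) x := by
  have hNk : N ≤ k * N := Nat.le_mul_of_pos_left N hk
  intro m
  induction m with
  | zero =>
    intro _ x
    have : x ∘ blk N k 0 = x := funext fun i => congrArg x (blk_zero N k i)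
    rw [this]; exact ⟨hrefl x, hrefl x⟩
  | succ m ih =>
    intro hm x
    have hmN : m < N := hm
    have hstep : x ∘ blk N k (m+1) = (x ∘ blk N k m) ∘ Equiv.swap m (m + k*N) :=
      funext fun i => congrArg x (blk_succ hk hmN i)
    have hsw := hA (x ∘ blk N k m) ((x ∘ blk N k m) ∘ Equiv.swap m (m + k*N))
      ⟨m, m + k*N,
        congrArg (x ∘ blk N k m) (Equiv.swap_apply_left _ _),
        congrArg (x ∘ blk N k m) (Equiv.swap_apply_right _ _),
        fun j hj1 hj2 => congrArg (x ∘ blk N k m) (Equiv.swap_apply_of_ne_of_ne hj1 hj2)⟩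
    obtain ⟨h1, h2⟩ := ih (le_of_lt hmN) x
    rw [hstep]
    exact ⟨htrans h1 hsw.1, htrans hsw.2 h2⟩

/-- Topological zero-one law for sets invariant under block swaps. -/
lemma zero_one (s : Set ((ℕ → unitInterval) × (ℕ → unitInterval)))
    (hinv : ∀ N k : ℕ, 1 ≤ k → ∀ p, p ∈ s ↔ (p.1 ∘ blk N k N, p.2 ∘ blk N k N) ∈ s)
    (hBP : HasBaireProperty s) (hnm : ¬ IsMeagre s) : IsMeagre sᶜ := by
  classical
  obtain ⟨u, huo, hum⟩ := hBP
  -- u is nonempty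
  have hune : u.Nonempty := by
    rcases eq_empty_or_nonempty u with rfl | h
    · exact absurd (hum.mono fun q hq => Set.mem_symmDiff.mpr (Or.inl ⟨hq, fun h => h⟩)) hnm
    · exact h
  obtain ⟨p, hp⟩ := hune
  obtain ⟨u1, u2, h1o, h2o, hp1, hp2, hsub12⟩ := isOpen_prod_iff.mp huo p.1 p.2 hp
  obtain ⟨I1, v1, hv1, hs1⟩ := isOpen_pi_iff.mp h1o p.1 hp1
  obtain ⟨I2, v2, hv2, hs2⟩ := isOpen_pi_iff.mp h2o p.2 hp2
  set N := (I1 ∪ I2).sup id + 1 with hNdef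
  have hN : ∀ i ∈ I1 ∪ I2, i < N := fun i hi =>
    Nat.lt_succ_of_le (Finset.le_sup (f := id) hi)
  have hN1 : 1 ≤ N := Nat.succ_le_succ (Nat.zero_le _)
  set C : Set ((ℕ → unitInterval) × (ℕ → unitInterval)) :=
    (Prod.fst ⁻¹' (↑I1 : Set ℕ).pi v1) ∩ (Prod.snd ⁻¹' (↑I2 : Set ℕ).pi v2) with hCdef
  have hCu : C ⊆ u := by
    rintro q ⟨hq1, hq2⟩
    exact hsub12 (Set.mem_prod.mpr ⟨hs1 hq1, hs2 hq2⟩)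
  have hCopen : IsOpen C :=
    ((isOpen_set_pi I1.finite_toSet fun a ha => (hv1 a ha).1).preimage continuous_fst).inter
      ((isOpen_set_pi I2.finite_toSet fun a ha => (hv2 a ha).1).preimage continuous_snd)
  have hCmeag : IsMeagre (C ∩ sᶜ) :=
    hum.mono fun q hq => Set.mem_symmDiff.mpr (Or.inr ⟨hCu hq.1, hq.2⟩)
  -- the block-swap homeomorphisms
  set f : ℕ → ((ℕ → unitInterval) × (ℕ → unitInterval)) →
      ((ℕ → unitInterval) × (ℕ → unitInterval)) :=
    fun k p => (p.1 ∘ blk N (k+1) N, p.2 ∘ blk N (k+1) N) with hfdef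
  have hks : ∀ k : ℕ, 1 ≤ k + 1 := fun k => Nat.succ_le_succ (Nat.zero_le _)
  have hinvol : ∀ k q, f k (f k q) = q := by
    intro k q
    refine Prod.ext ?_ ?_ <;> · funext i; exact congrArg _ (blk_blk (hks k) le_rfl i)
  have hcont : ∀ k, Continuous (f k) := fun k =>
    ((continuous_pi fun i => (continuous_apply _).comp continuous_fst).prodMk
      (continuous_pi fun i => (continuous_apply _).comp continuous_snd))
  have hopen : ∀ k, IsOpenMap (f k) := by
    intro k U hU
    have himg : f k '' U = f k ⁻¹' U := by
      ext q
      constructor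
      · rintro ⟨a, ha, rfl⟩; rwa [Set.mem_preimage, hinvol]
      · intro h; exact ⟨f k q, h, hinvol k q⟩
    rw [himg]; exact hU.preimage (hcont k)
  have hsinv : ∀ k q, q ∈ s ↔ f k q ∈ s := fun k q => hinv N (k+1) (hks k) q
  have hDmeag : ∀ k, IsMeagre (f k ⁻¹' C ∩ sᶜ) := by
    intro k
    have heq : f k ⁻¹' C ∩ sᶜ = f k ⁻¹' (C ∩ sᶜ) := by
      ext q
      simp only [Set.mem_inter_iff, Set.mem_preimage, Set.mem_compl_iff]
      exact and_congr_right fun _ => not_congr (hsinv k q)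
    rw [heq]
    exact hCmeag.preimage_of_isOpenMap (hcont k) (hopen k)
  set W := ⋃ k, f k ⁻¹' C with hWdef
  have hWopen : IsOpen W := isOpen_iUnion fun k => hCopen.preimage (hcont k)
  have hWdense : Dense W := by
    rw [dense_iff_inter_open]
    intro U hUo hUne
    obtain ⟨q, hq⟩ := hUne
    obtain ⟨w1, w2, hw1o, hw2o, hq1, hq2, hw⟩ := isOpen_prod_iff.mp hUo q.1 q.2 hq
    obtain ⟨J1, z1, hz1, hzs1⟩ := isOpen_pi_iff.mp hw1o q.1 hq1
    obtain ⟨J2, z2, hz2, hzs2⟩ := isOpen_pi_iff.mp hw2o q.2 hq2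
    set M := (J1 ∪ J2).sup id with hMdef
    have hM : ∀ j ∈ J1 ∪ J2, j ≤ M := fun j hj => Finset.le_sup (f := id) hj
    have hkN : M < (M+1) * N := by nlinarith [hN1]
    set y : (ℕ → unitInterval) × (ℕ → unitInterval) :=
      (fun j => if j < (M+1)*N then q.1 j else p.1 (j - (M+1)*N),
       fun j => if j < (M+1)*N then q.2 j else p.2 (j - (M+1)*N)) with hydef
    refine ⟨y, ?_, ?_⟩
    · -- y ∈ U
      apply hw
      refine Set.mem_prod.mpr ⟨hzs1 fun j hj => ?_, hzs2 fun j hj => ?_⟩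
      · have hjM : j < (M+1)*N := lt_of_le_of_lt (hM j (Finset.mem_union_left _ hj)) hkN
        show (if j < (M+1)*N then q.1 j else p.1 (j - (M+1)*N)) ∈ z1 j
        rw [if_pos hjM]; exact (hz1 j hj).2
      · have hjM : j < (M+1)*N := lt_of_le_of_lt (hM j (Finset.mem_union_right _ hj)) hkN
        show (if j < (M+1)*N then q.2 j else p.2 (j - (M+1)*N)) ∈ z2 j
        rw [if_pos hjM]; exact (hz2 j hj).2
    · -- y ∈ W
      apply Set.mem_iUnion.mpr
      refine ⟨M, ?_⟩
      have hblk : ∀ i, i < N → blk N (M+1) N i = i + (M+1)*N := fun i hi => blk_lt (hks M) hi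
      refine ⟨fun i hi => ?_, fun i hi => ?_⟩
      · have hiI : i ∈ I1 := hi
        have hiN : i < N := hN i (Finset.mem_union_left _ hiI)
        show (f M y).1 i ∈ v1 i
        have : (f M y).1 i = p.1 i := by
          show y.1 (blk N (M+1) N i) = p.1 i
          rw [hblk i hiN]
          show (if i + (M+1)*N < (M+1)*N then q.1 _ else p.1 (i + (M+1)*N - (M+1)*N)) = p.1 i
          rw [if_neg (by omega), Nat.add_sub_cancel]
        rw [this]; exact (hv1 i hiI).2
      · have hiI : i ∈ I2 := hi
        have hiN : i < N := hN i (Finset.mem_union_right _ hiI)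
        show (f M y).2 i ∈ v2 i
        have : (f M y).2 i = p.2 i := by
          show y.2 (blk N (M+1) N i) = p.2 i
          rw [hblk i hiN]
          show (if i + (M+1)*N < (M+1)*N then q.2 _ else p.2 (i + (M+1)*N - (M+1)*N)) = p.2 i
          rw [if_neg (by omega), Nat.add_sub_cancel]
        rw [this]; exact (hv2 i hiI).2
  -- conclude
  have h1 : IsMeagre (sᶜ ∩ W) := by
    rw [hWdef, Set.inter_iUnion]
    exact isMeagre_iUnion fun k => (hDmeag k).mono fun q hq => Set.mem_inter hq.2 hq.1
  have h2 : IsMeagre Wᶜ := by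
    have : W ∈ residual _ := residual_of_dense_open hWopen hWdense
    rw [IsMeagre, compl_compl]; exact this
  have hsub : sᶜ ⊆ (sᶜ ∩ W) ∪ Wᶜ := by
    intro q hq
    by_cases hqW : q ∈ W
    · exact Or.inl ⟨hq, hqW⟩
    · exact Or.inr hqW
  have hun : IsMeagre ((sᶜ ∩ W) ∪ Wᶜ) := by
    rw [IsMeagre, Set.compl_union]; exact Filter.inter_mem h1 h2
  exact hun.mono hsub

noncomputable def sqrtH : unitInterval ≃ₜ unitInterval where
  toFun t := ⟨Real.sqrt t, Real.sqrt_nonneg _, Real.sqrt_le_one.mpr t.2.2⟩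
  invFun t := ⟨(t : ℝ)^2, sq_nonneg _, pow_le_one₀ t.2.1 t.2.2⟩
  left_inv t := Subtype.ext (Real.sq_sqrt t.2.1)
  right_inv t := Subtype.ext (Real.sqrt_sq t.2.1)
  continuous_toFun :=
    Continuous.subtype_mk (Real.continuous_sqrt.comp continuous_subtype_val) _
  continuous_invFun :=
    Continuous.subtype_mk (continuous_subtype_val.pow 2) _

lemma le_sqrtH (t : unitInterval) : t ≤ sqrtH t := by
  show (t : ℝ) ≤ Real.sqrt t
  nlinarith [Real.sq_sqrt t.2.1, Real.sqrt_nonneg (t : ℝ), t.2.2,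
    Real.sqrt_le_one.mpr t.2.2]

lemma lt_sqrtH (t : unitInterval) (h0 : t ≠ 0) (h1 : t ≠ 1) : t < sqrtH t := by
  have hc0 : (t : ℝ) ≠ 0 := fun h => h0 (Subtype.ext h)
  have hc1 : (t : ℝ) ≠ 1 := fun h => h1 (Subtype.ext h)
  have ht0 : (0 : ℝ) < t := lt_of_le_of_ne t.2.1 (Ne.symm hc0)
  have ht1 : (t : ℝ) < 1 := lt_of_le_of_ne t.2.2 hc1
  show (t : ℝ) < Real.sqrt t
  have hs : 0 < Real.sqrt t := Real.sqrt_pos.mpr ht0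
  nlinarith [Real.sq_sqrt t.2.1, Real.sqrt_le_one.mpr t.2.2]

lemma dense_T : Dense {t : unitInterval | t ≠ 0 ∧ t ≠ 1} := by
  intro x
  rw [closure_subtype]
  have himg : Subtype.val '' {t : unitInterval | t ≠ 0 ∧ t ≠ 1} = Ioo (0:ℝ) 1 := by
    ext a
    constructor
    · rintro ⟨t, ⟨h0, h1⟩, rfl⟩
      exact ⟨lt_of_le_of_ne t.2.1 (Ne.symm fun h => h0 (Subtype.ext h)),
        lt_of_le_of_ne t.2.2 fun h => h1 (Subtype.ext h)⟩
    · intro ha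
      refine ⟨⟨a, le_of_lt ha.1, le_of_lt ha.2⟩,
        ⟨fun h => ?_, fun h => ?_⟩, rfl⟩
      · exact absurd (congrArg Subtype.val h) (ne_of_gt ha.1)
      · exact absurd (congrArg Subtype.val h) (ne_of_lt ha.2)
  rw [himg, closure_Ioo (by norm_num : (0:ℝ) ≠ 1)]
  exact x.2

/-- If `≾` is a *total* SWR on `[0,1]^ω` satisfying anonymity and strong Pareto,
then `E = {(x,y) : x ≻ y}` or `D = {(x,y) : y ≻ x}` fails to have the Baire
property in `X × X`. -/
theorem total_swr_non_baire
    (r : (ℕ → unitInterval) → (ℕ → unitInterval) → Prop)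
    (hrefl : Reflexive r) (htrans : Transitive r)
    (htotal : ∀ x y, r x y ∨ r y x)
    (hA : Anonymity r) (hSP : StrongPareto r) :
    ¬ HasBaireProperty {p : (ℕ → unitInterval) × (ℕ → unitInterval) |
        r p.2 p.1 ∧ ¬ r p.1 p.2} ∨
    ¬ HasBaireProperty {p : (ℕ → unitInterval) × (ℕ → unitInterval) |
        r p.1 p.2 ∧ ¬ r p.2 p.1} := by
  classical
  by_contra hcon
  push_neg at hcon
  obtain ⟨hBE, hBD⟩ := hcon
  set E : Set ((ℕ → unitInterval) × (ℕ → unitInterval)) :=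
    {p | r p.2 p.1 ∧ ¬ r p.1 p.2} with hEdef
  set D : Set ((ℕ → unitInterval) × (ℕ → unitInterval)) :=
    {p | r p.1 p.2 ∧ ¬ r p.2 p.1} with hDdef
  -- invariance under block swaps
  have hinvE : ∀ N k : ℕ, 1 ≤ k → ∀ p,
      p ∈ E ↔ (p.1 ∘ blk N k N, p.2 ∘ blk N k N) ∈ E := by
    intro N k hk p
    obtain ⟨ha1, ha2⟩ := equiv_blk hrefl htrans hA hk N le_rfl p.1
    obtain ⟨hb1, hb2⟩ := equiv_blk hrefl htrans hA hk N le_rfl p.2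
    constructor
    · rintro ⟨h1, h2⟩
      exact ⟨htrans hb2 (htrans h1 ha1), fun hc => h2 (htrans ha1 (htrans hc hb2))⟩
    · rintro ⟨h1, h2⟩
      exact ⟨htrans hb1 (htrans h1 ha2), fun hc => h2 (htrans ha2 (htrans hc hb1))⟩
  have hinvD : ∀ N k : ℕ, 1 ≤ k → ∀ p,
      p ∈ D ↔ (p.1 ∘ blk N k N, p.2 ∘ blk N k N) ∈ D := by
    intro N k hk p
    obtain ⟨ha1, ha2⟩ := equiv_blk hrefl htrans hA hk N le_rfl p.1
    obtain ⟨hb1, hb2⟩ := equiv_blk hrefl htrans hA hk N le_rfl p.2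
    constructor
    · rintro ⟨h1, h2⟩
      exact ⟨htrans ha2 (htrans h1 hb1), fun hc => h2 (htrans hb1 (htrans hc ha2))⟩
    · rintro ⟨h1, h2⟩
      exact ⟨htrans ha1 (htrans h1 hb2), fun hc => h2 (htrans hb2 (htrans hc ha1))⟩
  -- E and D are disjoint, and swapped by Prod.swap
  have hswapED : Dᶜ = Prod.swap ⁻¹' Eᶜ := rfl
  have hswapDE : Eᶜ = Prod.swap ⁻¹' Dᶜ := rfl
  have hswapcont : Continuous (Prod.swap :
      ((ℕ → unitInterval) × (ℕ → unitInterval)) → _) := continuous_swap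
  have hswapopen : IsOpenMap (Prod.swap :
      ((ℕ → unitInterval) × (ℕ → unitInterval)) → _) :=
    (Homeomorph.prodComm _ _).isOpenMap
  have absurd_univ : ¬ IsMeagre
      (univ : Set ((ℕ → unitInterval) × (ℕ → unitInterval))) := by
    intro h
    rw [IsMeagre, compl_univ] at h
    exact (dense_of_mem_residual h).nonempty.ne_empty rfl
  have union_meagre : ∀ (a b : Set ((ℕ → unitInterval) × (ℕ → unitInterval))),
      IsMeagre a → IsMeagre b → IsMeagre (a ∪ b) := by
    intro a b h1 h2
    rw [IsMeagre, Set.compl_union]; exact Filter.inter_mem h1 h2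
  -- both E and D are meagre
  have hEm : IsMeagre E := by
    by_contra h
    have hEc := zero_one E hinvE hBE h
    have hDc : IsMeagre Dᶜ := by
      rw [hswapED]; exact hEc.preimage_of_isOpenMap hswapcont hswapopen
    apply absurd_univ
    refine (union_meagre _ _ hEc hDc).mono fun p _ => ?_
    by_cases hpE : p ∈ E
    · exact Or.inr fun hpD => hpE.2 hpD.1
    · exact Or.inl hpE
  have hDm : IsMeagre D := by
    by_contra h
    have hDc := zero_one D hinvD hBD h
    have hEc : IsMeagre Eᶜ := by
      rw [hswapDE]; exact hDc.preimage_of_isOpenMap hswapcont hswapopen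
    apply absurd_univ
    refine (union_meagre _ _ hEc hDc).mono fun p _ => ?_
    by_cases hpE : p ∈ E
    · exact Or.inr fun hpD => hpE.2 hpD.1
    · exact Or.inl hpE
  have hEDm : IsMeagre (E ∪ D) := union_meagre _ _ hEm hDm
  -- the Pareto-improving homeomorphism
  set F : ℕ → (unitInterval ≃ₜ unitInterval) :=
    fun n => Nat.rec sqrtH (fun _ _ => Homeomorph.refl unitInterval) n with hFdef
  set φ : (ℕ → unitInterval) ≃ₜ (ℕ → unitInterval) := Homeomorph.piCongrRight F
  set Φ : ((ℕ → unitInterval) × (ℕ → unitInterval)) ≃ₜ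
      ((ℕ → unitInterval) × (ℕ → unitInterval)) :=
    φ.prodCongr (Homeomorph.refl _)
  have hΦm : IsMeagre (Φ ⁻¹' (E ∪ D)) :=
    hEDm.preimage_of_isOpenMap Φ.continuous Φ.isOpenMap
  -- the open dense set avoiding endpoints in coordinate 0
  set O : Set ((ℕ → unitInterval) × (ℕ → unitInterval)) :=
    (fun p => p.1 0) ⁻¹' {t : unitInterval | t ≠ 0 ∧ t ≠ 1} with hOdef
  have hTopen : IsOpen {t : unitInterval | t ≠ 0 ∧ t ≠ 1} := by
    have : {t : unitInterval | t ≠ 0 ∧ t ≠ 1} = ({0, 1} : Set unitInterval)ᶜ := by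
      ext t; simp [not_or]
    rw [this]
    exact ((Set.finite_singleton _).insert _).isClosed.isOpen_compl
  have hecont : Continuous fun p : ((ℕ → unitInterval) × (ℕ → unitInterval)) =>
      p.1 0 := (continuous_apply 0).comp continuous_fst
  have heopen : IsOpenMap fun p : ((ℕ → unitInterval) × (ℕ → unitInterval)) =>
      p.1 0 := (isOpenMap_eval 0).comp isOpenMap_fst
  have hOopen : IsOpen O := hTopen.preimage hecont
  have hOdense : Dense O := dense_T.preimage heopen
  -- pick a point in the residual intersection
  have hres : (E ∪ D)ᶜ ∩ (Φ ⁻¹' (E ∪ D))ᶜ ∩ O ∈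
      residual ((ℕ → unitInterval) × (ℕ → unitInterval)) :=
    Filter.inter_mem (Filter.inter_mem hEDm hΦm) (residual_of_dense_open hOopen hOdense)
  obtain ⟨p, ⟨hp1, hp2⟩, hp3⟩ := (dense_of_mem_residual hres).nonempty
  -- p.1 ∼ p.2 and φ p.1 ∼ p.2
  have hp1' : p ∉ E ∧ p ∉ D := by
    rw [Set.mem_compl_iff, Set.mem_union] at hp1; tauto
  have hsim1 : r p.1 p.2 ∧ r p.2 p.1 := by
    have h1 : ¬(r p.2 p.1 ∧ ¬ r p.1 p.2) := hp1'.1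
    have h2 : ¬(r p.1 p.2 ∧ ¬ r p.2 p.1) := hp1'.2
    rcases htotal p.1 p.2 with h | h <;> tauto
  have hΦp : Φ p = (φ p.1, p.2) := rfl
  have hp2' : (φ p.1, p.2) ∉ E ∧ (φ p.1, p.2) ∉ D := by
    rw [Set.mem_compl_iff, Set.mem_preimage, hΦp, Set.mem_union] at hp2; tauto
  have hsim2 : r (φ p.1) p.2 ∧ r p.2 (φ p.1) := by
    have h1 : ¬(r p.2 (φ p.1) ∧ ¬ r (φ p.1) p.2) := hp2'.1
    have h2 : ¬(r (φ p.1) p.2 ∧ ¬ r p.2 (φ p.1)) := hp2'.2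
    rcases htotal (φ p.1) p.2 with h | h <;> tauto
  -- strong Pareto contradiction
  have hφ : ∀ n, φ p.1 n = F n (p.1 n) := fun n => rfl
  have hle : ∀ n, p.1 n ≤ φ p.1 n := by
    intro n
    rw [hφ]
    cases n with
    | zero => exact le_sqrtH _
    | succ m => exact le_rfl
  have hlt : p.1 0 < φ p.1 0 := by
    rw [hφ]
    exact lt_sqrtH _ hp3.1 hp3.2
  obtain ⟨-, hns⟩ := hSP p.1 (φ p.1) hle ⟨0, hlt⟩
  exact hns (htrans hsim2.1 hsim1.2)
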